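/- Let L = ℤ^𝒱 be the lattice of a connected negative definite graph G and 𝒩 ⊂ 𝒱 any subset. For each Z ∈ L there exists a unique cycle x(Z) ∈ L such that: (i) m_n(x(Z)) = m_n(Z) for all n ∈ 𝒩; (ii) (x(Z), E_v) ≤ 0 for all v ∈ 𝒱 \ 𝒩; (iii) x(Z) is minimal among cycles satisfying (i) and (ii). -/

import Mathlib

section CS
set_option linter.unusedSectionVars false
variable {W : Type*} [Fintype W] [DecidableEq W] (A : Matrix W W ℚ)

private def Qf (x : W → ℚ) : ℚ := ∑ a, ∑ b, x a * A a b * x b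
private def Bf (x y : W → ℚ) : ℚ := ∑ a, ∑ b, x a * A a b * y b

lemma Bf_self (x : W → ℚ) : Bf A x x = Qf A x := rfl

lemma Bf_symm (hAs : ∀ a b, A a b = A b a) (x y : W → ℚ) : Bf A x y = Bf A y x := by
  unfold Bf
  rw [Finset.sum_comm]
  exact Finset.sum_congr rfl fun a _ => Finset.sum_congr rfl fun b _ => by rw [hAs b a]; ring

lemma Qf_expand (hAs : ∀ a b, A a b = A b a) (t : ℚ) (x y : W → ℚ) :
    Qf A (fun i => t * x i + y i) = t^2 * Qf A x + 2 * t * Bf A x y + Qf A y := by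
  have h : Qf A (fun i => t * x i + y i)
      = (t^2 * Qf A x + t * Bf A x y) + (t * Bf A y x + Qf A y) := by
    unfold Qf Bf
    simp only [Finset.mul_sum, ← Finset.sum_add_distrib]
    exact Finset.sum_congr rfl fun a _ => Finset.sum_congr rfl fun b _ => by ring
  rw [h, Bf_symm A hAs y x]; ring

lemma Qf_nonneg (hpos : ∀ x : W → ℚ, x ≠ 0 → 0 < Qf A x) (x : W → ℚ) : 0 ≤ Qf A x := by
  by_cases hx : x = 0
  · subst hx
    unfold Qf
    simp
  · exact (hpos x hx).le

lemma Bf_CS (hAs : ∀ a b, A a b = A b a) (hpos : ∀ x : W → ℚ, x ≠ 0 → 0 < Qf A x)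
    (x y : W → ℚ) : (Bf A x y)^2 ≤ Qf A x * Qf A y := by
  by_cases hx : x = 0
  · subst hx
    have h1 : Bf A 0 y = 0 := by unfold Bf; simp
    have h2 : Qf A (0 : W → ℚ) = 0 := by unfold Qf; simp
    rw [h1, h2]; simp
  · have ha : 0 < Qf A x := hpos x hx
    set a := Qf A x with hadef
    set b := Bf A x y with hbdef
    have h0 : 0 ≤ Qf A (fun i => (-(b/a)) * x i + y i) := Qf_nonneg A hpos _
    rw [Qf_expand A hAs] at h0
    have h0' : 0 ≤ (-(b/a))^2 * a + 2*(-(b/a)) * b + Qf A y := h0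
    have key : (-(b/a))^2 * a + 2*(-(b/a)) * b = -(b^2/a) := by
      field_simp
      ring
    rw [key] at h0'
    have hle : b^2/a ≤ Qf A y := by linarith
    have := (div_le_iff₀ ha).mp hle
    linarith [this]

lemma lem_key (hAs : ∀ a b, A a b = A b a) (hpos : ∀ x : W → ℚ, x ≠ 0 → 0 < Qf A x)
    (c : W → ℚ) :
    ∃ Bnd : ℚ, ∀ u : W → ℚ, (∀ a, 0 ≤ u a) → (∀ a, ∑ b, A a b * u b ≤ c a) →
      ∑ a, u a ≤ Bnd := by
  -- the matrix has nonzero determinant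
  have hdet : A.det ≠ 0 := by
    intro h0
    obtain ⟨v, hv, hmv⟩ := Matrix.exists_mulVec_eq_zero_iff.mpr h0
    have hq : Qf A v = 0 := by
      unfold Qf
      have : ∀ a, ∑ b, v a * A a b * v b = v a * A.mulVec v a := by
        intro a
        rw [Matrix.mulVec, dotProduct, Finset.mul_sum]
        exact Finset.sum_congr rfl fun b _ => by ring
      rw [Finset.sum_congr rfl fun a _ => this a, hmv]
      simp
    exact absurd hq (ne_of_gt (hpos v hv))
  set w : W → ℚ := A.adjugate.mulVec (fun _ => 1) with hw
  have hAw : A.mulVec w = fun _ => A.det := by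
    rw [hw, Matrix.mulVec_mulVec, Matrix.mul_adjugate, Matrix.smul_mulVec,
      Matrix.one_mulVec]
    funext a
    simp
  set D := A.det with hD
  set C : ℚ := ∑ a, |c a| with hC
  have hcC : ∀ a, c a ≤ C := fun a =>
    (le_abs_self (c a)).trans (Finset.single_le_sum (fun i _ => abs_nonneg (c i)) (Finset.mem_univ a))
  refine ⟨max 0 (C * Qf A w / D^2), ?_⟩
  intro u hu hc
  set T := ∑ a, u a with hT
  have hT0 : 0 ≤ T := Finset.sum_nonneg fun a _ => hu a
  rcases eq_or_lt_of_le hT0 with h | h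
  · rw [← h]; exact le_max_left _ _
  -- Q u ≤ C * T
  have hQu : Qf A u ≤ C * T := by
    have h1 : Qf A u = ∑ a, u a * (A.mulVec u a) := by
      unfold Qf
      refine Finset.sum_congr rfl fun a _ => ?_
      rw [Matrix.mulVec, dotProduct, Finset.mul_sum]
      exact Finset.sum_congr rfl fun b _ => by ring
    rw [h1, hT, Finset.mul_sum]
    refine Finset.sum_le_sum fun a _ => ?_
    calc u a * A.mulVec u a ≤ u a * c a :=
          mul_le_mul_of_nonneg_left (hc a) (hu a)
    _ ≤ u a * C := mul_le_mul_of_nonneg_left (hcC a) (hu a)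
    _ = C * u a := by ring
  -- B u w = D * T
  have hBuw : Bf A u w = D * T := by
    have h2 : Bf A u w = ∑ a, u a * (A.mulVec w a) := by
      unfold Bf
      refine Finset.sum_congr rfl fun a _ => ?_
      rw [Matrix.mulVec, dotProduct, Finset.mul_sum]
      exact Finset.sum_congr rfl fun b _ => by ring
    rw [h2, hAw, hT, Finset.mul_sum]
    exact Finset.sum_congr rfl fun a _ => by ring
  have hCS : (Bf A u w)^2 ≤ Qf A u * Qf A w := Bf_CS A hAs hpos u w
  have hQw : 0 ≤ Qf A w := Qf_nonneg A hpos w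
  have hfin : D^2 * T^2 ≤ C * T * Qf A w := by
    have h3 : (D*T)^2 ≤ Qf A u * Qf A w := by rw [← hBuw]; exact hCS
    have h4 : Qf A u * Qf A w ≤ (C*T) * Qf A w := mul_le_mul_of_nonneg_right hQu hQw
    nlinarith [h3.trans h4]
  have hstep : D^2 * T ≤ C * Qf A w := by
    have hD2 : 0 < D^2 := by positivity
    nlinarith [hfin, h]
  have : T ≤ C * Qf A w / D^2 := by
    rw [le_div_iff₀ (by positivity : (0:ℚ) < D^2)]
    nlinarith [hstep]
  exact this.trans (le_max_right _ _)

end CS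

lemma lem_sum_vanish {V : Type*} [Fintype V] {β : Type*} [AddCommMonoid β]
    (p : V → Prop) [DecidablePred p] [Fintype (Subtype p)] (g : V → β) (hg : ∀ a, ¬ p a → g a = 0) :
    ∑ a, g a = ∑ a : Subtype p, g a.val := by
  classical
  rw [← Finset.sum_filter_add_sum_filter_not Finset.univ p g]
  have hs := Finset.sum_subtype (p := p) (F := ‹Fintype (Subtype p)›) (Finset.univ.filter p) (fun x => by simp) g
  rw [hs]
  have : ∑ x ∈ Finset.univ.filter (fun x => ¬ p x), g x = 0 :=
    Finset.sum_eq_zero fun x hx => hg x (Finset.mem_filter.mp hx).2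
  rw [this, add_zero]

lemma lem_mono {V : Type*} [Fintype V] [DecidableEq V] (I : Matrix V V ℤ)
    (hoff : ∀ v w : V, v ≠ w → 0 ≤ I v w) (v : V) {x y : V → ℤ}
    (hxy : ∀ w, x w ≤ y w) (hv : x v = y v) :
    ∑ w, I v w * x w ≤ ∑ w, I v w * y w := by
  rw [← Finset.add_sum_erase Finset.univ (fun w => I v w * x w) (Finset.mem_univ v),
      ← Finset.add_sum_erase Finset.univ (fun w => I v w * y w) (Finset.mem_univ v)]
  refine add_le_add (by rw [hv]) (Finset.sum_le_sum fun w hw => ?_)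
  exact mul_le_mul_of_nonneg_left (hxy w) (hoff v w (Finset.ne_of_mem_erase hw).symm)
section SubPos
variable {V : Type*} [Fintype V]

lemma lem_sub_posdef [DecidableEq V] (I : Matrix V V ℤ)
    (hnegdef : ∀ x : V → ℚ, x ≠ 0 → ∑ v, ∑ w, x v * (I v w : ℚ) * x w < 0)
    (p : V → Prop) [DecidablePred p] [Fintype (Subtype p)] :
    ∀ x : Subtype p → ℚ, x ≠ 0 →
      0 < Qf (Matrix.of fun a b : Subtype p => -(I a.1 b.1 : ℚ)) x := by
  intro x hx
  classical
  set xe : V → ℚ := fun v => if h : p v then x ⟨v, h⟩ else 0 with hxe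
  have hxe0 : xe ≠ 0 := by
    obtain ⟨a, ha⟩ := Function.ne_iff.mp hx
    intro h0
    apply ha
    have : xe a.1 = x a := by simp [hxe, a.2]
    rw [← this, h0]
    rfl
  have hneg := hnegdef xe hxe0
  have houter : ∑ v, ∑ w, xe v * (I v w : ℚ) * xe w
      = ∑ a : Subtype p, ∑ b : Subtype p, x a * (I a.1 b.1 : ℚ) * x b := by
    rw [lem_sum_vanish p (fun v => ∑ w, xe v * (I v w : ℚ) * xe w)
      (fun a ha => by simp [hxe, ha])]
    refine Finset.sum_congr rfl fun a _ => ?_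
    rw [lem_sum_vanish p (fun w => xe a.1 * (I a.1 w : ℚ) * xe w)
      (fun b hb => by simp [hxe, hb])]
    refine Finset.sum_congr rfl fun b _ => ?_
    simp [hxe, a.2, b.2]
  rw [houter] at hneg
  have : Qf (Matrix.of fun a b : Subtype p => -(I a.1 b.1 : ℚ)) x
      = -(∑ a : Subtype p, ∑ b : Subtype p, x a * (I a.1 b.1 : ℚ) * x b) := by
    unfold Qf
    rw [← Finset.sum_neg_distrib]
    refine Finset.sum_congr rfl fun a _ => ?_
    rw [← Finset.sum_neg_distrib]
    refine Finset.sum_congr rfl fun b _ => ?_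
    simp only [Matrix.of_apply]
    ring
  rw [this]
  linarith

end SubPos
/-- Existence and uniqueness of the Laufer operator: `L = ℤ^𝒱` the lattice of a connected
negative definite graph `G`, `𝒩 ⊆ 𝒱` any subset.  For each `Z ∈ L` there is a unique cycle
`x(Z)` with (i) `m_n(x(Z)) = m_n(Z)` for `n ∈ 𝒩`, (ii) `(x(Z), E_v) ≤ 0` for `v ∉ 𝒩`, and
(iii) `x(Z)` minimal (coordinatewise) among cycles satisfying (i) and (ii). -/
theorem stmt13 {V : Type*} [Fintype V] [DecidableEq V]
    (I : Matrix V V ℤ)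
    (hsym : I.IsSymm)
    (hdiag : ∀ v : V, I v v < 0)
    (hoff : ∀ v w : V, v ≠ w → 0 ≤ I v w)
    (hnegdef : ∀ x : V → ℚ, x ≠ 0 → ∑ v, ∑ w, x v * (I v w : ℚ) * x w < 0)
    (hconn : ∀ v w : V, Relation.ReflTransGen (fun a b : V => a ≠ b ∧ I a b ≠ 0) v w)
    (N : Set V) (Z : V → ℤ) :
    ∃! x : V → ℤ,
      ((∀ n ∈ N, x n = Z n) ∧ (∀ v ∉ N, ∑ w, I v w * x w ≤ 0)) ∧
      ∀ y : V → ℤ, (∀ n ∈ N, y n = Z n) → (∀ v ∉ N, ∑ w, I v w * y w ≤ 0) → x ≤ y := by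
  classical
  have hsymE : ∀ a b : V, I a b = I b a := fun a b => hsym.apply b a
  set P : (V → ℤ) → Prop :=
    fun x => (∀ n ∈ N, x n = Z n) ∧ (∀ v ∉ N, ∑ w, I v w * x w ≤ 0) with hP
  -- the subtype of free vertices
  let Mz : Matrix {v : V // v ∉ N} {v : V // v ∉ N} ℤ := Matrix.of fun a b => I a.1 b.1
  let Aq : Matrix {v : V // v ∉ N} {v : V // v ∉ N} ℚ := Matrix.of fun a b => -(I a.1 b.1 : ℚ)
  have hAqs : ∀ a b, Aq a b = Aq b a := fun a b => by
    simp only [Aq, Matrix.of_apply, hsymE a.1 b.1]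
  have hAqpos : ∀ x : {v : V // v ∉ N} → ℚ, x ≠ 0 → 0 < Qf Aq x :=
    lem_sub_posdef I hnegdef (fun v => v ∉ N)
  -- determinant of the free submatrix is nonzero
  have hdetq : (Matrix.of fun a b : {v : V // v ∉ N} => (I a.1 b.1 : ℚ)).det ≠ 0 := by
    intro h0
    obtain ⟨v, hv, hmv⟩ := Matrix.exists_mulVec_eq_zero_iff.mpr h0
    have hq : Qf Aq v = 0 := by
      unfold Qf
      have h1 : ∀ a, ∑ b, v a * Aq a b * v b
          = -(v a * ((Matrix.of fun a b : {v : V // v ∉ N} => (I a.1 b.1 : ℚ)).mulVec v a)) := by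
        intro a
        rw [Matrix.mulVec, dotProduct, Finset.mul_sum, ← Finset.sum_neg_distrib]
        exact Finset.sum_congr rfl fun b _ => by simp only [Aq, Matrix.of_apply]; ring
      rw [Finset.sum_congr rfl fun a _ => h1 a, hmv]
      simp
    exact absurd hq (ne_of_gt (hAqpos v hv))
  have hdetz : Mz.det ≠ 0 := by
    intro h
    apply hdetq
    have hmap : (Int.castRingHom ℚ).mapMatrix Mz
        = Matrix.of fun a b : {v : V // v ∉ N} => (I a.1 b.1 : ℚ) := by
      ext a b
      simp [Mz, Matrix.map_apply]
    rw [← hmap, ← RingHom.map_det, h]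
    simp
  -- an integer vector with strictly negative image under Mz
  let d0 : {v : V // v ∉ N} → ℤ := Mz.adjugate.mulVec (fun _ => -1)
  have hMd0 : Mz.mulVec d0 = fun _ => -Mz.det := by
    rw [Matrix.mulVec_mulVec, Matrix.mul_adjugate, Matrix.smul_mulVec,
      Matrix.one_mulVec]
    funext a
    simp
  let e : ℤ := if 0 < Mz.det then 1 else -1
  let D : ℤ := e * Mz.det
  have hD1 : 1 ≤ D := by
    rcases lt_trichotomy 0 Mz.det with h | h | h
    · simp only [D, e, if_pos h]
      omega
    · exact absurd h.symm hdetz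
    · simp only [D, e, if_neg (by omega : ¬ 0 < Mz.det)]
      omega
  let d : {v : V // v ∉ N} → ℤ := fun a => e * d0 a
  have hMd : ∀ a, (∑ b, Mz a b * d b) = -D := by
    intro a
    have h1 : Mz.mulVec d = fun _ => -D := by
      have h2 : d = e • d0 := rfl
      rw [h2, Matrix.mulVec_smul, hMd0]
      funext b
      simp [D, mul_comm]
    have h3 : Mz.mulVec d a = ∑ b, Mz a b * d b := by
      simp [Matrix.mulVec, dotProduct]
    rw [← h3, h1]
  let dext : V → ℤ := fun w => if h : w ∉ N then d ⟨w, h⟩ else 0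
  let r : V → ℤ := fun v => ∑ w, I v w * Z w
  let k : ℤ := ∑ v, |r v|
  have hk0 : 0 ≤ k := Finset.sum_nonneg fun v _ => abs_nonneg _
  have hrk : ∀ v, r v ≤ k := by
    intro v
    have h5 := Finset.single_le_sum (f := fun v => |r v|) (fun i _ => abs_nonneg (r i))
      (Finset.mem_univ v)
    exact (le_abs_self _).trans h5
  let s : V → ℤ := fun w => Z w + k * dext w
  have hsP : P s := by
    constructor
    · intro n hn
      simp [s, dext, hn]
    · intro v hv
      have hsum : ∑ w, I v w * s w = r v + k * ∑ w, I v w * dext w := by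
        calc ∑ w, I v w * s w = ∑ w, (I v w * Z w + k * (I v w * dext w)) :=
              Finset.sum_congr rfl fun w _ => by simp only [s]; ring
        _ = r v + k * ∑ w, I v w * dext w := by
              rw [Finset.sum_add_distrib, ← Finset.mul_sum]
      have hino : ∑ w, I v w * dext w = -D := by
        rw [lem_sum_vanish (fun v => v ∉ N) (fun w => I v w * dext w)
          (fun a ha => by simp [dext, ha])]
        have h4 : ∑ a : {v : V // v ∉ N}, I v a.1 * dext a.1 = ∑ b, Mz ⟨v, hv⟩ b * d b :=
          Finset.sum_congr rfl fun b _ => by simp [dext, b.2, Mz]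
        rw [h4, hMd ⟨v, hv⟩]
      rw [hsum, hino]
      nlinarith [hrk v, hk0, hD1]
  -- closure under coordinatewise min
  have hminP : ∀ x, P x → ∀ y, P y → P (fun v => min (x v) (y v)) := by
    intro x hx y hy
    constructor
    · intro n hn
      simp [hx.1 n hn, hy.1 n hn]
    · intro v hv
      rcases le_total (x v) (y v) with h | h
      · exact (lem_mono I hoff v (fun w => min_le_left _ _) (min_eq_left h)).trans (hx.2 v hv)
      · exact (lem_mono I hoff v (fun w => min_le_right _ _) (min_eq_right h)).trans (hy.2 v hv)
  -- uniform lower bound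
  obtain ⟨Bnd, hBnd⟩ := lem_key Aq hAqs hAqpos (fun a => -((∑ w, I a.1 w * s w : ℤ) : ℚ))
  let Bz : ℤ := max 0 ⌈Bnd⌉
  have hlow : ∀ x, P x → ∀ v, min (Z v) (s v - Bz) ≤ x v := by
    intro x hx v
    set y : V → ℤ := fun v => min (x v) (s v) with hy
    have hyP : P y := hminP x hx s hsP
    have hyN : ∀ n ∈ N, y n = s n := by
      intro n hn
      simp only [hy]
      rw [hx.1 n hn, hsP.1 n hn]
      simp
    have hyb : ∀ v, (hv : v ∉ N) → s v - y v ≤ Bz := by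
      intro v hv
      set u : {v : V // v ∉ N} → ℚ := fun a => ((s a.1 - y a.1 : ℤ) : ℚ) with hu
      have hu0 : ∀ a, 0 ≤ u a := by
        intro a
        simp only [hu]
        exact_mod_cast sub_nonneg.mpr (min_le_right _ _)
      have hcon : ∀ a : {v : V // v ∉ N},
          ∑ b, Aq a b * u b ≤ -((∑ w, I a.1 w * s w : ℤ) : ℚ) := by
        intro a
        have hz : (∑ b : {v : V // v ∉ N}, I a.1 b.1 * (s b.1 - y b.1))
            = ∑ w, I a.1 w * (s w - y w) := by
          rw [lem_sum_vanish (fun v => v ∉ N) (fun w => I a.1 w * (s w - y w))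
            (fun b hb => by show I a.1 b * (s b - y b) = 0; rw [hyN b (not_not.mp hb)]; ring)]
        have h1 : ∑ b, Aq a b * u b
            = -(((∑ b : {v : V // v ∉ N}, I a.1 b.1 * (s b.1 - y b.1) : ℤ) : ℚ)) := by
          push_cast
          rw [← Finset.sum_neg_distrib]
          exact Finset.sum_congr rfl fun b _ => by
            simp only [Aq, Matrix.of_apply, hu]
            push_cast
            ring
        rw [h1, hz]
        have h2 : (∑ w, I a.1 w * s w) ≤ ∑ w, I a.1 w * (s w - y w) := by
          have h3 : ∑ w, I a.1 w * (s w - y w)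
              = (∑ w, I a.1 w * s w) - ∑ w, I a.1 w * y w := by
            rw [← Finset.sum_sub_distrib]
            exact Finset.sum_congr rfl fun w _ => by ring
          rw [h3]
          have := hyP.2 a.1 a.2
          linarith
        have h2q : ((∑ w, I a.1 w * s w : ℤ) : ℚ)
            ≤ ((∑ w, I a.1 w * (s w - y w) : ℤ) : ℚ) := by exact_mod_cast h2
        linarith
      have hsumu := hBnd u hu0 hcon
      have hone : u ⟨v, hv⟩ ≤ Bnd :=
        le_trans (Finset.single_le_sum (fun a _ => hu0 a) (Finset.mem_univ (⟨v, hv⟩ : {v : V // v ∉ N}))) hsumu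
      have hfin : ((s v - y v : ℤ) : ℚ) ≤ (Bz : ℤ) := by
        refine hone.trans ((Int.le_ceil Bnd).trans ?_)
        exact_mod_cast le_max_right 0 ⌈Bnd⌉
      exact_mod_cast hfin
    by_cases hv : v ∈ N
    · exact (min_le_left _ _).trans_eq (hx.1 v hv).symm
    · have h1 := hyb v hv
      have h2 : y v ≤ x v := min_le_left _ _
      calc min (Z v) (s v - Bz) ≤ s v - Bz := min_le_right _ _
      _ ≤ y v := by linarith
      _ ≤ x v := h2
  -- assemble the coordinatewise minimum
  have hex : ∀ v : V, ∃ mv : ℤ, (∃ x, P x ∧ x v = mv) ∧ ∀ z, (∃ x, P x ∧ x v = z) → mv ≤ z :=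
    fun v => Int.exists_least_of_bdd
      ⟨min (Z v) (s v - Bz), fun z ⟨x, hx, hxv⟩ => hxv ▸ hlow x hx v⟩ ⟨s v, s, hsP, rfl⟩
  choose μ hμw hμle using hex
  have hμub : ∀ x, P x → ∀ v, μ v ≤ x v := fun x hx v => hμle v (x v) ⟨x, hx, rfl⟩
  have hμP : P μ := by
    constructor
    · intro n hn
      obtain ⟨x, hx, hxv⟩ := hμw n
      rw [← hxv, hx.1 n hn]
    · intro v hv
      obtain ⟨x, hx, hxv⟩ := hμw v
      exact (lem_mono I hoff v (fun w => hμub x hx w) hxv.symm).trans (hx.2 v hv)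
  refine ⟨μ, ⟨⟨hμP.1, hμP.2⟩, fun y hy1 hy2 => fun v => hμub y ⟨hy1, hy2⟩ v⟩, ?_⟩
  rintro y ⟨hyP, hymin⟩
  have h1 : y ≤ μ := hymin μ hμP.1 hμP.2
  have h2 : μ ≤ y := fun v => hμub y hyP v
  exact le_antisymm h1 h2
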